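/- Let k ≥ 1, a ≥ 1, b ≥ 0 and c ≥ 1 be integers, and let p be any prime. Then the positive integer p^{v_p(c·L_k)} · ∏_q q, where the product ranges over all primes q such that q | c·L_k, q ∤ a and p | (q − 1), is a period of the function g_{p,k,φ}. -/

import Mathlib

/-- `L k = lcm (1, 2, …, k)`. -/
def Lk (k : ℕ) : ℕ := (Finset.Icc 1 k).lcm id

/-- `g_{k,φ} (n) = (∏_{i=0}^{k} φ (b + a (n + i c))) / φ (lcm_{0 ≤ i ≤ k} (b + a (n + i c)))`. -/
def gkphi (k a b c n : ℕ) : ℚ :=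
  (∏ i ∈ Finset.range (k + 1), ((b + a * (n + i * c)).totient : ℚ)) /
    (((Finset.range (k + 1)).lcm fun i => b + a * (n + i * c)).totient : ℚ)

/-- weight: contribution of prime `q` with exponent `e` to `v_p ∘ φ`. -/
def Wt (p q e : ℕ) : ℕ :=
  if e = 0 then 0 else (e - 1) * q.factorization p + (q - 1).factorization p

/-- contribution of the prime `q` to `v_p (g)`. -/
def Cq (p q k : ℕ) (m : ℕ → ℕ) : ℤ :=
  (∑ i ∈ Finset.range (k+1), (Wt p q ((m i).factorization q) : ℤ)) -
    (Wt p q ((Finset.range (k+1)).sup fun i => (m i).factorization q) : ℤ)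

lemma Wt_self (p : ℕ) (hp : p.Prime) (e : ℕ) : Wt p p e = e - 1 := by
  unfold Wt
  have h1 : p.factorization p = 1 := by simp [hp.factorization]
  have h2 : (p-1).factorization p = 0 :=
    Nat.factorization_eq_zero_of_not_dvd
      (Nat.not_dvd_of_pos_of_lt (by have := hp.two_le; omega) (by have := hp.two_le; omega))
  rcases Nat.eq_zero_or_pos e with he | he
  · simp [he]
  · rw [if_neg (by omega)]
    simp [h1, h2]

lemma Wt_ne (p q e : ℕ) (hp : p.Prime) (hq : q.Prime) (hne : q ≠ p) :
    Wt p q e = if e = 0 then 0 else (q - 1).factorization p := by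
  unfold Wt
  have h1 : q.factorization p = 0 := by simp [hq.factorization, Finsupp.single_apply, hne]
  simp [h1]

lemma finset_lcm_ne_zero {ι : Type*} (s : Finset ι) (f : ι → ℕ) (h : ∀ i ∈ s, f i ≠ 0) :
    s.lcm f ≠ 0 := by
  classical
  induction s using Finset.induction_on with
  | empty => simp
  | @insert _ _ ha ih =>
      rw [Finset.lcm_insert]
      exact Nat.lcm_ne_zero (h _ (Finset.mem_insert_self _ _))
        (ih fun i hi => h i (Finset.mem_insert_of_mem hi))

lemma factorization_finset_lcm {ι : Type*} (q : ℕ) (s : Finset ι) (f : ι → ℕ)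
    (h : ∀ i ∈ s, f i ≠ 0) :
    (s.lcm f).factorization q = s.sup fun i => (f i).factorization q := by
  classical
  induction s using Finset.induction_on with
  | empty => simp
  | @insert a s ha ih =>
      rw [Finset.lcm_insert, Finset.sup_insert]
      have h1 : f a ≠ 0 := h _ (Finset.mem_insert_self _ _)
      have h2 : s.lcm f ≠ 0 := finset_lcm_ne_zero s f fun i hi => h i (Finset.mem_insert_of_mem hi)
      rw [show GCDMonoid.lcm (f a) (s.lcm f) = (f a).lcm (s.lcm f) from rfl,
        Nat.factorization_lcm h1 h2]
      rw [Finsupp.sup_apply, ih fun i hi => h i (Finset.mem_insert_of_mem hi)]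

lemma totient_factorization (p m : ℕ) (hm : m ≠ 0) :
    (Nat.totient m).factorization p = ∑ q ∈ m.primeFactors, Wt p q (m.factorization q) := by
  rw [Nat.totient_eq_prod_factorization hm, Finsupp.prod]
  have hterms : ∀ q ∈ m.factorization.support, q ^ (m.factorization q - 1) * (q - 1) ≠ 0 := by
    intro q hq
    have hqp : q.Prime := Nat.prime_of_mem_primeFactors (by rwa [Nat.support_factorization] at hq)
    have := hqp.two_le
    exact Nat.mul_ne_zero (pow_ne_zero _ hqp.ne_zero) (by omega)
  rw [Nat.factorization_prod hterms, Finset.sum_apply', Nat.support_factorization]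
  apply Finset.sum_congr rfl
  intro q hq
  have hqp : q.Prime := Nat.prime_of_mem_primeFactors hq
  have he : m.factorization q ≠ 0 := by
    rwa [← Finsupp.mem_support_iff, Nat.support_factorization]
  have hq1 : q - 1 ≠ 0 := by have := hqp.two_le; omega
  rw [Nat.factorization_mul (pow_ne_zero _ hqp.ne_zero) hq1, Finsupp.add_apply,
    Nat.factorization_pow, Finsupp.smul_apply, smul_eq_mul, Wt, if_neg he]

lemma totient_factorization' (p m : ℕ) (hm : m ≠ 0) (P : Finset ℕ)
    (hP : m.primeFactors ⊆ P) :
    (Nat.totient m).factorization p = ∑ q ∈ P, Wt p q (m.factorization q) := by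
  rw [totient_factorization p m hm]
  apply Finset.sum_subset hP
  intro q hq hq'
  have : m.factorization q = 0 := by
    rw [← Nat.support_factorization] at hq'
    exact Finsupp.notMem_support_iff.mp hq'
  simp [this, Wt]

/-- truncation step of the key combinatorial lemma -/
lemma key_trunc (k M : ℕ) (f : ℕ → ℕ)
    (hone : ∀ i ∈ Finset.range (k+1), ∀ j ∈ Finset.range (k+1), M < f i → M < f j → i = j) :
    (∑ i ∈ Finset.range (k+1), ((f i - 1 : ℕ) : ℤ)) -
      (((Finset.range (k+1)).sup f - 1 : ℕ) : ℤ) =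
    (∑ i ∈ Finset.range (k+1), ((min (f i) M - 1 : ℕ) : ℤ)) -
      (((Finset.range (k+1)).sup (fun i => min (f i) M) - 1 : ℕ) : ℤ) := by
  by_cases hsup : (Finset.range (k+1)).sup f ≤ M
  · have hmin : ∀ i ∈ Finset.range (k+1), min (f i) M = f i := fun i hi =>
      min_eq_left ((Finset.le_sup hi).trans hsup)
    have h1 : (∑ i ∈ Finset.range (k+1), ((min (f i) M - 1 : ℕ) : ℤ)) =
        ∑ i ∈ Finset.range (k+1), ((f i - 1 : ℕ) : ℤ) :=
      Finset.sum_congr rfl fun i hi => by rw [hmin i hi]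
    have h2 : (Finset.range (k+1)).sup (fun i => min (f i) M) = (Finset.range (k+1)).sup f :=
      Finset.sup_congr rfl hmin
    rw [h1, h2]
  · push_neg at hsup
    obtain ⟨i0, hi0mem, hi0⟩ :=
      Finset.exists_mem_eq_sup (Finset.range (k+1)) (Finset.nonempty_range_iff.2 (by omega)) f
    have hMi0 : M < f i0 := by rw [← hi0]; exact hsup
    have hothers : ∀ j ∈ Finset.range (k+1), j ≠ i0 → f j ≤ M := by
      intro j hj hne
      by_contra hcon
      exact hne (hone j hj i0 hi0mem (lt_of_not_ge hcon) hMi0)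
    have hsum1 : (∑ i ∈ Finset.range (k+1), ((f i - 1 : ℕ) : ℤ)) =
        ((f i0 - 1 : ℕ) : ℤ) + ∑ i ∈ (Finset.range (k+1)).erase i0, ((f i - 1 : ℕ) : ℤ) :=
      (Finset.add_sum_erase _ _ hi0mem).symm
    have hsum2 : (∑ i ∈ Finset.range (k+1), ((min (f i) M - 1 : ℕ) : ℤ)) =
        ((min (f i0) M - 1 : ℕ) : ℤ) +
          ∑ i ∈ (Finset.range (k+1)).erase i0, ((min (f i) M - 1 : ℕ) : ℤ) :=
      (Finset.add_sum_erase _ _ hi0mem).symm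
    have hmini0 : min (f i0) M = M := min_eq_right hMi0.le
    have hsup2 : (Finset.range (k+1)).sup (fun i => min (f i) M) = M := by
      apply le_antisymm
      · exact Finset.sup_le fun j hj => min_le_right _ _
      · have h := Finset.le_sup (f := fun i => min (f i) M) hi0mem
        simpa [hmini0] using h
    have herase : ∀ i ∈ (Finset.range (k+1)).erase i0,
        ((min (f i) M - 1 : ℕ) : ℤ) = ((f i - 1 : ℕ) : ℤ) := by
      intro i hi
      rw [min_eq_left (hothers i (Finset.mem_of_mem_erase hi) (Finset.ne_of_mem_erase hi))]
    have h3 : (∑ i ∈ (Finset.range (k+1)).erase i0, ((min (f i) M - 1 : ℕ) : ℤ)) =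
        ∑ i ∈ (Finset.range (k+1)).erase i0, ((f i - 1 : ℕ) : ℤ) :=
      Finset.sum_congr rfl herase
    rw [hsum1, hsum2, hsup2, hmini0, ← hi0, h3]
    ring

/-- the key combinatorial lemma: the `q = p` contribution -/
lemma key_comb (k M : ℕ) (f g : ℕ → ℕ)
    (hmin : ∀ i ∈ Finset.range (k+1), min (f i) M = min (g i) M)
    (hf : ∀ i ∈ Finset.range (k+1), ∀ j ∈ Finset.range (k+1), M < f i → M < f j → i = j)
    (hg : ∀ i ∈ Finset.range (k+1), ∀ j ∈ Finset.range (k+1), M < g i → M < g j → i = j) :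
    (∑ i ∈ Finset.range (k+1), ((f i - 1 : ℕ) : ℤ)) -
      (((Finset.range (k+1)).sup f - 1 : ℕ) : ℤ) =
    (∑ i ∈ Finset.range (k+1), ((g i - 1 : ℕ) : ℤ)) -
      (((Finset.range (k+1)).sup g - 1 : ℕ) : ℤ) := by
  have h1 : (∑ i ∈ Finset.range (k+1), ((min (f i) M - 1 : ℕ) : ℤ)) =
      ∑ i ∈ Finset.range (k+1), ((min (g i) M - 1 : ℕ) : ℤ) :=
    Finset.sum_congr rfl fun i hi => by rw [hmin i hi]
  have h2 : (Finset.range (k+1)).sup (fun i => min (f i) M) =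
      (Finset.range (k+1)).sup (fun i => min (g i) M) :=
    Finset.sup_congr rfl hmin
  rw [key_trunc k M f hf, key_trunc k M g hg, h1, h2]

lemma sup_eq_zero_iff' (k : ℕ) (e : ℕ → ℕ) :
    (Finset.range (k+1)).sup e = 0 ↔ ∀ i ∈ Finset.range (k+1), e i = 0 := by
  constructor
  · intro h i hi
    exact Nat.le_zero.mp (h ▸ Finset.le_sup hi)
  · intro h
    exact Nat.le_zero.mp (Finset.sup_le fun i hi => (h i hi).le)

/-- if at most one index has `q ∣ m i` then the contribution of `q` vanishes. -/
lemma Cq_zero_of_subsingleton (p q k : ℕ) (m : ℕ → ℕ)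
    (h1 : ∀ i ∈ Finset.range (k+1), ∀ j ∈ Finset.range (k+1),
      (m i).factorization q ≠ 0 → (m j).factorization q ≠ 0 → i = j) :
    Cq p q k m = 0 := by
  unfold Cq
  by_cases hall : ∀ i ∈ Finset.range (k+1), (m i).factorization q = 0
  · have hsup : (Finset.range (k+1)).sup (fun i => (m i).factorization q) = 0 :=
      (sup_eq_zero_iff' k _).2 hall
    rw [hsup, Finset.sum_congr rfl fun i hi => by rw [hall i hi]]
    simp [Wt]
  · push_neg at hall
    obtain ⟨i0, hi0mem, hi0⟩ := hall
    have hothers : ∀ j ∈ Finset.range (k+1), j ≠ i0 → (m j).factorization q = 0 := by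
      intro j hj hne
      by_contra hcon
      exact hne (h1 j hj i0 hi0mem hcon hi0)
    have hsup : (Finset.range (k+1)).sup (fun i => (m i).factorization q) =
        (m i0).factorization q := by
      apply le_antisymm
      · apply Finset.sup_le
        intro j hj
        by_cases hji : j = i0
        · rw [hji]
        · rw [hothers j hj hji]; exact Nat.zero_le _
      · exact Finset.le_sup (f := fun i => (m i).factorization q) hi0mem
    rw [hsup, Finset.sum_eq_single i0 (fun j hj hji => by
        rw [hothers j hj hji]; simp [Wt]) (fun h => absurd hi0mem h)]
    ring

/-- if `p ∤ q - 1` and `q ≠ p` then the contribution of `q` vanishes. -/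
lemma Cq_zero_of_not_dvd (p q k : ℕ) (m : ℕ → ℕ) (hp : p.Prime) (hq : q.Prime)
    (hne : q ≠ p) (hndvd : ¬ p ∣ q - 1) : Cq p q k m = 0 := by
  have h1 : q.factorization p = 0 := by simp [hq.factorization, Finsupp.single_apply, hne]
  have h2 : (q - 1).factorization p = 0 := Nat.factorization_eq_zero_of_not_dvd hndvd
  have hW : ∀ e, Wt p q e = 0 := by intro e; simp [Wt, h1, h2]
  simp [Cq, hW]

lemma decomp (p k : ℕ) (m : ℕ → ℕ) (hm : ∀ i ∈ Finset.range (k+1), m i ≠ 0)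
    (P : Finset ℕ) (hP : ((Finset.range (k+1)).lcm m).primeFactors ⊆ P) :
    ((∏ i ∈ Finset.range (k+1), Nat.totient (m i)).factorization p : ℤ) -
      ((Nat.totient ((Finset.range (k+1)).lcm m)).factorization p : ℤ) =
    ∑ q ∈ P, Cq p q k m := by
  have hL : (Finset.range (k+1)).lcm m ≠ 0 := finset_lcm_ne_zero _ _ hm
  have hphi : ∀ i ∈ Finset.range (k+1), Nat.totient (m i) ≠ 0 := fun i hi =>
    (Nat.totient_pos.mpr (Nat.pos_of_ne_zero (hm i hi))).ne'
  have hPi : ∀ i ∈ Finset.range (k+1), (m i).primeFactors ⊆ P := fun i hi =>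
    subset_trans (Nat.primeFactors_mono (Finset.dvd_lcm hi) hL) hP
  have hprod : (∏ i ∈ Finset.range (k+1), Nat.totient (m i)).factorization p
      = ∑ i ∈ Finset.range (k+1), ∑ q ∈ P, Wt p q ((m i).factorization q) := by
    rw [Nat.factorization_prod hphi, Finset.sum_apply']
    exact Finset.sum_congr rfl fun i hi =>
      totient_factorization' p (m i) (hm i hi) P (hPi i hi)
  have hlcm : (Nat.totient ((Finset.range (k+1)).lcm m)).factorization p
      = ∑ q ∈ P, Wt p q ((Finset.range (k+1)).sup fun i => (m i).factorization q) := by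
    rw [totient_factorization' p _ hL P hP]
    exact Finset.sum_congr rfl fun q _ => by rw [factorization_finset_lcm q _ _ hm]
  rw [hprod, hlcm, Finset.sum_comm]
  push_cast
  rw [← Finset.sum_sub_distrib]
  rfl

/-- a truncated valuation is unchanged by adding a highly divisible number -/
lemma min_fact_eq (p : ℕ) (hp : p.Prime) (x t M : ℕ) (hx : x ≠ 0) (ht : p ^ M ∣ t) :
    min ((x + t).factorization p) M = min (x.factorization p) M := by
  have hxt : x + t ≠ 0 := by omega
  have key : ∀ y z : ℕ, y ≠ 0 → z ≠ 0 → z = y + t →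
      min (z.factorization p) M ≤ y.factorization p := by
    intro y z hy hz hzy
    subst hzy
    have h1 : p ^ min ((y + t).factorization p) M ∣ y + t := by
      apply (Nat.Prime.pow_dvd_iff_le_factorization hp hz).2
      exact min_le_left _ _
    have h2 : p ^ min ((y + t).factorization p) M ∣ t :=
      dvd_trans (pow_dvd_pow p (min_le_right _ _)) ht
    have h3 : p ^ min ((y + t).factorization p) M ∣ y := by
      have h4 := Nat.dvd_sub h1 h2
      rwa [Nat.add_sub_cancel] at h4
    exact (Nat.Prime.pow_dvd_iff_le_factorization hp hy).1 h3
  apply le_antisymm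
  · exact le_min (key x (x + t) hx hxt rfl) (min_le_right _ _)
  · -- min (x.f) M ≤ min ((x+t).f) M : p^min ∣ x and ∣ t so ∣ x+t
    apply le_min _ (min_le_right _ _)
    have h1 : p ^ min (x.factorization p) M ∣ x :=
      (Nat.Prime.pow_dvd_iff_le_factorization hp hx).2 (min_le_left _ _)
    have h2 : p ^ min (x.factorization p) M ∣ t :=
      dvd_trans (pow_dvd_pow p (min_le_right _ _)) ht
    exact (Nat.Prime.pow_dvd_iff_le_factorization hp hxt).1 (dvd_add h1 h2)

/-- at most one term of the progression is divisible by `p^(M+1)` -/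
lemma atmost_one (p k s M : ℕ) (hp : p.Prime) (m : ℕ → ℕ)
    (hm : ∀ i ∈ Finset.range (k+1), m i ≠ 0)
    (hstep : ∀ i d : ℕ, m (i + d) = m i + s * d)
    (hsd : ∀ d, 0 < d → d ≤ k → ¬ p ^ (M+1) ∣ s * d) :
    ∀ i ∈ Finset.range (k+1), ∀ j ∈ Finset.range (k+1),
      M < (m i).factorization p → M < (m j).factorization p → i = j := by
  have aux : ∀ i ∈ Finset.range (k+1), ∀ j ∈ Finset.range (k+1), i < j →
      M < (m i).factorization p → M < (m j).factorization p → False := by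
    intro i hi j hj hij h1 h2
    simp only [Finset.mem_range] at hi hj
    have hd : j = i + (j - i) := by omega
    have hstep' : m j = m i + s * (j - i) := by rw [hd, hstep i (j - i)]; rw [← hd]
    have hp1 : p ^ (M+1) ∣ m i :=
      (Nat.Prime.pow_dvd_iff_le_factorization hp (hm i (by simp; omega))).2 h1
    have hp2 : p ^ (M+1) ∣ m j :=
      (Nat.Prime.pow_dvd_iff_le_factorization hp (hm j (by simp; omega))).2 h2
    have hp3 : p ^ (M+1) ∣ s * (j - i) := by
      have := Nat.dvd_sub hp2 hp1
      rwa [hstep', Nat.add_sub_cancel_left] at this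
    exact hsd (j - i) (by omega) (by omega) hp3
  intro i hi j hj h1 h2
  rcases lt_trichotomy i j with h | h | h
  · exact absurd (aux i hi j hj h h1 h2) not_false
  · exact h
  · exact absurd (aux j hj i hi h h2 h1) not_false

/-- congruence for `Cq` when `q ≠ p` : only divisibility by `q` matters -/
lemma Cq_congr (p q k : ℕ) (m m' : ℕ → ℕ) (hp : p.Prime) (hq : q.Prime) (hne : q ≠ p)
    (h : ∀ i ∈ Finset.range (k+1),
      ((m i).factorization q = 0 ↔ (m' i).factorization q = 0)) :
    Cq p q k m = Cq p q k m' := by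
  have hW : ∀ e e' : ℕ, (e = 0 ↔ e' = 0) → Wt p q e = Wt p q e' := by
    intro e e' hee
    rw [Wt_ne p q e hp hq hne, Wt_ne p q e' hp hq hne]
    by_cases h0 : e = 0
    · rw [if_pos h0, if_pos (hee.1 h0)]
    · rw [if_neg h0, if_neg (fun hc => h0 (hee.2 hc))]
  unfold Cq
  congr 1
  · exact Finset.sum_congr rfl fun i hi => by rw [hW _ _ (h i hi)]
  · have : ((Finset.range (k+1)).sup (fun i => (m i).factorization q) = 0 ↔
        (Finset.range (k+1)).sup (fun i => (m' i).factorization q) = 0) := by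
      rw [sup_eq_zero_iff', sup_eq_zero_iff']
      constructor
      · intro hall i hi
        exact (h i hi).1 (hall i hi)
      · intro hall i hi
        exact (h i hi).2 (hall i hi)
    rw [hW _ _ this]

/-- For any prime `p`, the positive integer
`p ^ v_p (c L_k) ⬝ ∏_{q prime, q ∣ c L_k, q ∤ a, p ∣ q − 1} q`
is a period of `g_{p,k,φ} (n) = v_p (g_{k,φ} (n))`. -/
theorem period_of_local_gkphi (k a b c : ℕ)
    (hk : 1 ≤ k) (ha : 1 ≤ a) (hc : 1 ≤ c)
    (p : ℕ) (hp : p.Prime) :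
    ∀ n : ℕ, 0 < n →
      padicValRat p (gkphi k a b c
        (n + p ^ padicValNat p (c * Lk k) *
          ∏ q ∈ (c * Lk k).divisors.filter
            (fun q => q.Prime ∧ ¬ q ∣ a ∧ p ∣ (q - 1)), q)) =
      padicValRat p (gkphi k a b c n) := by
  haveI := Fact.mk hp
  intro n hn
  have ha0 : a ≠ 0 := by omega
  have hLk0 : Lk k ≠ 0 := by
    apply finset_lcm_ne_zero
    intro i hi
    simp only [Finset.mem_Icc] at hi
    simpa using (by omega : i ≠ 0)
  have hcL0 : c * Lk k ≠ 0 := Nat.mul_ne_zero (by omega) hLk0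
  set Q := ∏ q ∈ (c * Lk k).divisors.filter
      (fun q => q.Prime ∧ ¬ q ∣ a ∧ p ∣ (q - 1)), q with hQdef
  set T := p ^ padicValNat p (c * Lk k) * Q with hTdef
  have hmne : ∀ N : ℕ, 0 < N → ∀ i ∈ Finset.range (k+1),
      (fun i => b + a * (N + i * c)) i ≠ 0 := by
    intro N hN i _
    simp only
    have : 0 < a * (N + i * c) := Nat.mul_pos (by omega) (by omega)
    omega
  have vg : ∀ N : ℕ, 0 < N → ∀ P : Finset ℕ,
      ((Finset.range (k+1)).lcm (fun i => b + a * (N + i * c))).primeFactors ⊆ P →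
      padicValRat p (gkphi k a b c N) = ∑ q ∈ P, Cq p q k (fun i => b + a * (N + i * c)) := by
    intro N hN P hP
    have hm := hmne N hN
    have hL : (Finset.range (k+1)).lcm (fun i => b + a * (N + i * c)) ≠ 0 :=
      finset_lcm_ne_zero _ _ hm
    have hprod0 : (∏ i ∈ Finset.range (k+1), Nat.totient (b + a * (N + i * c))) ≠ 0 :=
      Finset.prod_ne_zero_iff.2 fun i hi =>
        (Nat.totient_pos.mpr (Nat.pos_of_ne_zero (hm i hi))).ne'
    have hphiL : Nat.totient ((Finset.range (k+1)).lcm (fun i => b + a * (N + i * c))) ≠ 0 :=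
      (Nat.totient_pos.mpr (Nat.pos_of_ne_zero hL)).ne'
    unfold gkphi
    rw [← Nat.cast_prod,
      padicValRat.div (by exact_mod_cast hprod0) (by exact_mod_cast hphiL),
      padicValRat.of_nat, padicValRat.of_nat,
      ← Nat.factorization_def _ hp, ← Nat.factorization_def _ hp]
    exact decomp p k _ hm P hP
  set m : ℕ → ℕ := fun i => b + a * (n + i * c) with hmdef
  set m' : ℕ → ℕ := fun i => b + a * ((n + T) + i * c) with hm'def
  have haT : p ^ ((a * (c * Lk k)).factorization p) ∣ a * T := by
    rw [Nat.factorization_mul ha0 hcL0, Finsupp.add_apply, pow_add]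
    apply mul_dvd_mul (Nat.ordProj_dvd a p)
    rw [hTdef, Nat.factorization_def _ hp]
    exact dvd_mul_right _ _
  have hstep : ∀ i d : ℕ, m (i + d) = m i + (a * c) * d := by
    intro i d; simp only [hmdef]; ring
  have hstep' : ∀ i d : ℕ, m' (i + d) = m' i + (a * c) * d := by
    intro i d; simp only [hm'def]; ring
  have hshift : ∀ i : ℕ, m' i = m i + a * T := by
    intro i; simp only [hmdef, hm'def]; ring
  have hm0 : ∀ i ∈ Finset.range (k+1), m i ≠ 0 := hmne n hn
  have hm0' : ∀ i ∈ Finset.range (k+1), m' i ≠ 0 := hmne (n+T) (by omega)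
  have hL : (Finset.range (k+1)).lcm m ≠ 0 := finset_lcm_ne_zero _ _ hm0
  have hL' : (Finset.range (k+1)).lcm m' ≠ 0 := finset_lcm_ne_zero _ _ hm0'
  set P := ((Finset.range (k+1)).lcm m).primeFactors ∪
    ((Finset.range (k+1)).lcm m').primeFactors with hPdef
  rw [vg n hn P Finset.subset_union_left,
    vg (n+T) (by omega) P Finset.subset_union_right]
  apply Finset.sum_congr rfl
  intro q hqP
  have hq : q.Prime := by
    rcases Finset.mem_union.1 hqP with h | h
    · exact Nat.prime_of_mem_primeFactors h
    · exact Nat.prime_of_mem_primeFactors h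
  by_cases hqp : q = p
  · subst hqp
    set M := (a * (c * Lk k)).factorization q with hM
    have hac0 : a * c ≠ 0 := Nat.mul_ne_zero ha0 (by omega)
    have hacd : ∀ d, 0 < d → d ≤ k → ¬ q ^ (M+1) ∣ (a * c) * d := by
      intro d hd1 hdk hdvd
      have hd0 : d ≠ 0 := by omega
      have hdLk : d ∣ Lk k := Finset.dvd_lcm (by simp only [Finset.mem_Icc]; omega)
      have hfd : d.factorization q ≤ (Lk k).factorization q :=
        Finsupp.le_def.1 ((Nat.factorization_le_iff_dvd hd0 hLk0).2 hdLk) q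
      have hacd0 : (a * c) * d ≠ 0 := Nat.mul_ne_zero hac0 hd0
      have hle := (Nat.Prime.pow_dvd_iff_le_factorization hq hacd0).1 hdvd
      rw [Nat.factorization_mul hac0 hd0, Finsupp.add_apply] at hle
      have hMeq : M = (a*c).factorization q + (Lk k).factorization q := by
        rw [hM, show a * (c * Lk k) = (a * c) * Lk k by ring,
          Nat.factorization_mul hac0 hLk0, Finsupp.add_apply]
      omega
    have hone := atmost_one q k (a*c) M hq m hm0 hstep hacd
    have hone' := atmost_one q k (a*c) M hq m' hm0' hstep' hacd
    have hmin : ∀ i ∈ Finset.range (k+1),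
        min ((m' i).factorization q) M = min ((m i).factorization q) M := by
      intro i hi
      rw [hshift i]
      exact min_fact_eq q hq (m i) (a*T) M (hm0 i hi) haT
    simp only [Cq, Wt_self q hq]
    exact key_comb k M (fun i => (m' i).factorization q)
      (fun i => (m i).factorization q) hmin hone' hone
  · by_cases hqT : q ∣ a * T
    · apply Cq_congr p q k m' m hp hq hqp
      intro i hi
      have hdvd_iff : q ∣ m' i ↔ q ∣ m i := by
        rw [hshift i]
        constructor
        · intro hd
          have h2 := Nat.dvd_sub hd hqT
          rwa [Nat.add_sub_cancel] at h2
        · intro hd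
          exact dvd_add hd hqT
      rw [Nat.factorization_eq_zero_iff, Nat.factorization_eq_zero_iff]
      simp [hq, hm0 i hi, hm0' i hi, hdvd_iff]
    · have hqa : ¬ q ∣ a := fun h => hqT (h.mul_right T)
      have hqTT : ¬ q ∣ T := fun h => hqT (h.mul_left a)
      by_cases hq1 : p ∣ q - 1
      · have hqcL : ¬ q ∣ c * Lk k := by
          intro hdvd
          apply hqTT
          have hmem : q ∈ (c * Lk k).divisors.filter
              (fun q => q.Prime ∧ ¬ q ∣ a ∧ p ∣ (q - 1)) :=
            Finset.mem_filter.2 ⟨Nat.mem_divisors.2 ⟨hdvd, hcL0⟩, hq, hqa, hq1⟩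
          rw [hTdef]
          exact Dvd.dvd.mul_left (hQdef ▸ Finset.dvd_prod_of_mem _ hmem) _
        have hsub : ∀ (mm : ℕ → ℕ), (∀ i ∈ Finset.range (k+1), mm i ≠ 0) →
            (∀ i d : ℕ, mm (i+d) = mm i + (a*c)*d) → Cq p q k mm = 0 := by
          intro mm hmm hst
          apply Cq_zero_of_subsingleton
          have hsd : ∀ d, 0 < d → d ≤ k → ¬ q ^ (0+1) ∣ (a*c) * d := by
            intro d hd1 hdk hdvd
            rw [zero_add, pow_one] at hdvd
            rcases (Nat.Prime.dvd_mul hq).1 hdvd with h | h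
            · rcases (Nat.Prime.dvd_mul hq).1 h with h' | h'
              · exact hqa h'
              · exact hqcL (h'.mul_right _)
            · have hdLk : d ∣ Lk k := Finset.dvd_lcm (by simp only [Finset.mem_Icc]; omega)
              exact hqcL (Dvd.dvd.mul_left (h.trans hdLk) c)
          have hao := atmost_one q k (a*c) 0 hq mm hmm hst hsd
          intro i hi j hj h1 h2
          exact hao i hi j hj (Nat.pos_of_ne_zero h1) (Nat.pos_of_ne_zero h2)
        rw [hsub m' hm0' hstep', hsub m hm0 hstep]
      · rw [Cq_zero_of_not_dvd p q k m' hp hq hqp hq1,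
          Cq_zero_of_not_dvd p q k m hp hq hqp hq1]
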